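/- Let P ⊆ ℝⁿ be a Delone set of finite local complexity and let φ : ℝⁿ → ℝⁿ be a C¹ map which satisfies Hypothesis (H) for P and whose derivative map dφ is strongly P-equivariant. Then the map sending P − x to φ(P) − φ(x) is uniformly continuous with respect to the pattern metric D: for every ε > 0 there exists δ > 0 such that for all x, y ∈ ℝⁿ, D(P − x, P − y) < δ implies D(φ(P) − φ(x), φ(P) − φ(y)) < ε. -/

import Mathlib

open Metric Set

noncomputable section

/-- Euclidean space ℝⁿ. -/
abbrev Euc (n : ℕ) := EuclideanSpace ℝ (Fin n)

/-- The translate `P - x = {p - x : p ∈ P}`. -/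
def shiftSet {n : ℕ} (P : Set (Euc n)) (x : Euc n) : Set (Euc n) :=
  (fun p => p - x) '' P

/-- The `r`-patch of `P` around `x`: `B_r[P - x] = B(0,r) ∩ (P - x)`. -/
def patch {n : ℕ} (P : Set (Euc n)) (r : ℝ) (x : Euc n) : Set (Euc n) :=
  ball (0 : Euc n) r ∩ shiftSet P x

/-- `P` is uniformly discrete: there is a positive minimal distance between points. -/
def UnifDiscrete {n : ℕ} (P : Set (Euc n)) : Prop :=
  ∃ δ > 0, ∀ p ∈ P, ∀ q ∈ P, p ≠ q → δ ≤ ‖p - q‖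

/-- `P` is relatively dense: every ball of radius `R` contains a point of `P`. -/
def RelDense {n : ℕ} (P : Set (Euc n)) : Prop :=
  ∃ R > 0, ∀ x : Euc n, ∃ p ∈ P, ‖p - x‖ < R

/-- `P` has finite local complexity: for each `r > 0`, only finitely many `r`-patches
around points of `P`. -/
def FLC {n : ℕ} (P : Set (Euc n)) : Prop :=
  ∀ r > 0, {s : Set (Euc n) | ∃ x ∈ P, s = patch P r x}.Finite

/-- `f` is `P`-equivariant with range `R`. -/
def EquivRange {n : ℕ} {F : Type*} (P : Set (Euc n)) (R : ℝ) (f : Euc n → F) : Prop :=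
  ∀ x y : Euc n, patch P R x = patch P R y → f x = f y

/-- `f` is strongly `P`-equivariant: `P`-equivariant with some finite range `R > 0`. -/
def StrongEquiv {n : ℕ} {F : Type*} (P : Set (Euc n)) (f : Euc n → F) : Prop :=
  ∃ R > 0, EquivRange P R f

/-- `f`, viewed as a function on the subset `Q`, is `P`-equivariant with range `R`. -/
def EquivRangeOn {n : ℕ} {F : Type*} (P Q : Set (Euc n)) (R : ℝ) (f : Euc n → F) : Prop :=
  ∀ x ∈ Q, ∀ y ∈ Q, patch P R x = patch P R y → f x = f y

/-- `f`, viewed as a function on the subset `Q`, is strongly `P`-equivariant. -/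
def StrongEquivOn {n : ℕ} {F : Type*} (P Q : Set (Euc n)) (f : Euc n → F) : Prop :=
  ∃ R > 0, EquivRangeOn P Q R f

/-- `Q` is locally derivable from `P`. -/
def LocallyDerivable {n : ℕ} (P Q : Set (Euc n)) : Prop :=
  ∃ R > 0, ∀ x y : Euc n, patch P R x = patch P R y →
    ({0} : Set (Euc n)) ∩ shiftSet Q x = ({0} : Set (Euc n)) ∩ shiftSet Q y

/-- Hypothesis (H): for every `r > 0` there is `r' > 0` such that for all `x`,
`B(φ(x), r) ∩ φ(P) ⊆ φ(B(x, r') ∩ P)`. -/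
def HypoH {n : ℕ} (P : Set (Euc n)) (φ : Euc n → Euc n) : Prop :=
  ∀ r > 0, ∃ r' > 0, ∀ x : Euc n, ball (φ x) r ∩ (φ '' P) ⊆ φ '' (ball x r' ∩ P)

/-- The pattern metric `D` on closed subsets of ℝⁿ. -/
def patternDist {n : ℕ} (A B : Set (Euc n)) : ℝ :=
  sInf {ε : ℝ | 0 < ε ∧ Metric.hausdorffDist
    ((ball (0 : Euc n) (1 / ε) ∩ A) ∪ sphere (0 : Euc n) (1 / ε))
    ((ball (0 : Euc n) (1 / ε) ∩ B) ∪ sphere (0 : Euc n) (1 / ε)) ≤ ε}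

/-- A continuous `f : ℝⁿ → ℝⁿ` is weakly `P`-equivariant if it is uniformly approximated
by strongly `P`-equivariant continuous functions. -/
def WeakEquiv {n : ℕ} (P : Set (Euc n)) (f : Euc n → Euc n) : Prop :=
  ∀ ε > 0, ∃ g : Euc n → Euc n, Continuous g ∧ StrongEquiv P g ∧ ∀ x : Euc n, ‖f x - g x‖ < ε

/-- `P` is aperiodic: the only translation fixing `P` is `0`. -/
def IsAperiodicSet {n : ℕ} (P : Set (Euc n)) : Prop :=
  ∀ x : Euc n, shiftSet P x = P → x = 0


namespace Aux10

variable {n : ℕ}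

lemma mem_shiftSet {P : Set (Euc n)} {x a : Euc n} :
    a ∈ shiftSet P x ↔ x + a ∈ P := by
  constructor
  · rintro ⟨p, hp, rfl⟩
    have : x + (p - x) = p := by abel
    rwa [this]
  · intro h
    exact ⟨x + a, h, add_sub_cancel_left x a⟩

lemma mem_patch {P : Set (Euc n)} {R : ℝ} {x a : Euc n} :
    a ∈ patch P R x ↔ ‖a‖ < R ∧ x + a ∈ P := by
  rw [patch, mem_inter_iff, mem_ball_zero_iff, mem_shiftSet]

lemma patch_translate {P : Set (Euc n)} {R r : ℝ} {a b : Euc n}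
    (h : patch P r a = patch P r b) (v : Euc n) (hv : ‖v‖ + R ≤ r) :
    patch P R (a + v) = patch P R (b + v) := by
  have key : ∀ c d : Euc n, patch P r c = patch P r d →
      ∀ w : Euc n, ‖w‖ < R → c + v + w ∈ P → d + v + w ∈ P := by
    intro c d hcd w hw hmem
    have h1 : (v + w) ∈ patch P r c := by
      rw [mem_patch]
      constructor
      · calc ‖v + w‖ ≤ ‖v‖ + ‖w‖ := norm_add_le _ _
          _ < ‖v‖ + R := by linarith
          _ ≤ r := hv
      · rwa [← add_assoc]
    rw [hcd, mem_patch] at h1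
    rw [add_assoc]
    exact h1.2
  ext w
  rw [mem_patch, mem_patch]
  exact ⟨fun ⟨hw, hm⟩ => ⟨hw, key a b h w hw hm⟩,
         fun ⟨hw, hm⟩ => ⟨hw, key b a h.symm w hw hm⟩⟩

lemma finite_of_separated_of_bounded {A : Set (Euc n)} {R δ₀ : ℝ} (hδ : 0 < δ₀)
    (hA : A ⊆ closedBall 0 R)
    (hsep : ∀ a ∈ A, ∀ b ∈ A, a ≠ b → δ₀ ≤ ‖a - b‖) : A.Finite := by
  obtain ⟨t, htf, hcov⟩ := (totallyBounded_iff.mp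
    (isCompact_closedBall (0 : Euc n) R).totallyBounded) (δ₀ / 2) (by positivity)
  have hsub : A ⊆ ⋃ c ∈ t, A ∩ ball c (δ₀ / 2) := by
    intro a ha
    have := hcov (hA ha)
    simp only [mem_iUnion] at this ⊢
    obtain ⟨c, hc, hball⟩ := this
    exact ⟨c, hc, ha, hball⟩
  refine Set.Finite.subset (Set.Finite.biUnion htf (fun c _ => ?_)) hsub
  apply Set.Subsingleton.finite
  rintro a ⟨ha, hac⟩ b ⟨hb, hbc⟩
  by_contra hne
  have h1 := hsep a ha b hb hne
  have h2 : dist a b < δ₀ := by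
    calc dist a b ≤ dist a c + dist c b := dist_triangle _ _ _
      _ < δ₀ / 2 + δ₀ / 2 := by
          rw [mem_ball] at hac hbc
          rw [dist_comm c b]
          linarith
      _ = δ₀ := by ring
  rw [dist_eq_norm] at h2
  linarith

lemma patch_finite {P : Set (Euc n)} {δ₀ : ℝ} (hδ₀ : 0 < δ₀)
    (hsep : ∀ p ∈ P, ∀ q ∈ P, p ≠ q → δ₀ ≤ ‖p - q‖) (R : ℝ) (x : Euc n) :
    (patch P R x).Finite := by
  refine finite_of_separated_of_bounded hδ₀ (R := R) ?_ ?_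
  · exact fun a ha => mem_closedBall_zero_iff.mpr (le_of_lt (mem_patch.mp ha).1)
  · intro a ha b hb hab
    have h1 := (mem_patch.mp ha).2
    have h2 := (mem_patch.mp hb).2
    have hne : x + a ≠ x + b := fun h => hab (by exact add_left_cancel h)
    have := hsep _ h1 _ h2 hne
    rwa [add_sub_add_left_eq_sub] at this

lemma exists_gap {P : Set (Euc n)}
    (hUD : ∃ δ > 0, ∀ p ∈ P, ∀ q ∈ P, p ≠ q → δ ≤ ‖p - q‖)
    (hFLC : ∀ r > 0, {s : Set (Euc n) | ∃ x ∈ P, s = patch P r x}.Finite) (ρ : ℝ) :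
    ∃ γ > 0, ∀ u v : Euc n,
      (∃ p ∈ P, ∃ q ∈ P, u = p - q) → (∃ p ∈ P, ∃ q ∈ P, v = p - q) →
      ‖u‖ ≤ ρ → ‖v‖ ≤ ρ → ‖u - v‖ < γ → u = v := by
  obtain ⟨δ₀, hδ₀, hsep⟩ := hUD
  set ρ' : ℝ := max ρ 0 + 1 with hρ'def
  have hρ' : 0 < ρ' := by
    have := le_max_right ρ 0
    simp only [hρ'def]; linarith
  have hC := hFLC ρ' hρ'
  set Δ : Set (Euc n) := {u | (∃ p ∈ P, ∃ q ∈ P, u = p - q) ∧ ‖u‖ ≤ ρ} with hΔdef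
  have hΔfin : Δ.Finite := by
    have hfin : (⋃ s ∈ {s : Set (Euc n) | ∃ x ∈ P, s = patch P ρ' x}, s).Finite := by
      refine Set.Finite.biUnion hC (fun s hs => ?_)
      obtain ⟨x, _, rfl⟩ := hs
      exact patch_finite hδ₀ hsep ρ' x
    refine hfin.subset ?_
    rintro u ⟨⟨p, hp, q, hq, rfl⟩, hn⟩
    refine mem_biUnion (show patch P ρ' q ∈ _ from ⟨q, hq, rfl⟩) ?_
    rw [mem_patch]
    constructor
    · calc ‖p - q‖ ≤ ρ := hn
        _ ≤ max ρ 0 := le_max_left _ _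
        _ < ρ' := by simp only [hρ'def]; linarith
    · have : q + (p - q) = p := by abel
      rwa [this]
  set D : Set ℝ := (fun q : Euc n × Euc n => ‖q.1 - q.2‖) '' ((Δ ×ˢ Δ) ∩ {q | q.1 ≠ q.2})
    with hDdef
  have hDfin : D.Finite := (((hΔfin.prod hΔfin).subset inter_subset_left).image _)
  rcases D.eq_empty_or_nonempty with hD | hD
  · refine ⟨1, one_pos, ?_⟩
    intro u v hu hv hun hvn _
    by_contra hne
    have hmem : ‖u - v‖ ∈ D := ⟨(u, v), ⟨mk_mem_prod ⟨hu, hun⟩ ⟨hv, hvn⟩, hne⟩, rfl⟩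
    rw [hD] at hmem
    exact hmem
  · obtain ⟨d, hdD, hdmin⟩ := Set.exists_min_image D id hDfin hD
    have hdpos : 0 < d := by
      obtain ⟨⟨u, v⟩, ⟨_, hne⟩, rfl⟩ := hdD
      exact norm_pos_iff.mpr (sub_ne_zero.mpr hne)
    refine ⟨d, hdpos, ?_⟩
    intro u v hu hv hun hvn hlt
    by_contra hne
    have hmem : ‖u - v‖ ∈ D := ⟨(u, v), ⟨mk_mem_prod ⟨hu, hun⟩ ⟨hv, hvn⟩, hne⟩, rfl⟩
    exact absurd hlt (not_lt.mpr (hdmin _ hmem))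

end Aux10

namespace Aux10

variable {n : ℕ}

lemma euc_nontrivial (hn : 0 < n) : Nontrivial (Euc n) := by
  refine ⟨⟨EuclideanSpace.single ⟨0, hn⟩ (1 : ℝ), 0, fun h => ?_⟩⟩
  have h2 : ‖EuclideanSpace.single (⟨0, hn⟩ : Fin n) (1 : ℝ)‖ = ‖(0 : Euc n)‖ := by rw [h]
  rw [EuclideanSpace.norm_single, norm_zero, norm_one] at h2
  exact one_ne_zero h2

lemma exists_sphere_near [Nontrivial (Euc n)] {a : Euc n} {s : ℝ} (hs : 0 < s)
    (ha : ‖a‖ ≤ s) : ∃ c ∈ sphere (0 : Euc n) s, dist a c ≤ s - ‖a‖ := by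
  rcases eq_or_ne a 0 with rfl | ha0
  · obtain ⟨c, hc⟩ := exists_norm_eq (Euc n) hs.le
    exact ⟨c, by simpa [mem_sphere_zero_iff_norm] using hc,
      by simp [dist_eq_norm, hc]⟩
  · have hna : 0 < ‖a‖ := norm_pos_iff.mpr ha0
    refine ⟨(s / ‖a‖) • a, ?_, ?_⟩
    · rw [mem_sphere_zero_iff_norm, norm_smul, Real.norm_eq_abs,
        abs_of_pos (by positivity), div_mul_cancel₀]
      exact ne_of_gt hna
    · have : a - (s / ‖a‖) • a = (1 - s / ‖a‖) • a := by
        rw [sub_smul, one_smul]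
      rw [dist_eq_norm, this, norm_smul, Real.norm_eq_abs]
      have h1 : (1 : ℝ) - s / ‖a‖ ≤ 0 := by
        rw [sub_nonpos, le_div_iff₀ hna, one_mul]; exact ha
      rw [abs_of_nonpos h1]
      have : -(1 - s / ‖a‖) * ‖a‖ = s - ‖a‖ := by
        field_simp
        ring
      rw [this]

lemma bddBelow_patternSet (A B : Set (Euc n)) :
    BddBelow {ε : ℝ | 0 < ε ∧ Metric.hausdorffDist
      ((ball (0 : Euc n) (1 / ε) ∩ A) ∪ sphere (0 : Euc n) (1 / ε))
      ((ball (0 : Euc n) (1 / ε) ∩ B) ∪ sphere (0 : Euc n) (1 / ε)) ≤ ε} :=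
  ⟨0, fun _ he => he.1.le⟩

lemma one_mem_patternSet [Nontrivial (Euc n)] (A B : Set (Euc n)) :
    (1 : ℝ) ∈ {ε : ℝ | 0 < ε ∧ Metric.hausdorffDist
      ((ball (0 : Euc n) (1 / ε) ∩ A) ∪ sphere (0 : Euc n) (1 / ε))
      ((ball (0 : Euc n) (1 / ε) ∩ B) ∪ sphere (0 : Euc n) (1 / ε)) ≤ ε} := by
  refine ⟨one_pos, ?_⟩
  have key : ∀ (C D : Set (Euc n)), ∀ x ∈ (ball (0 : Euc n) (1/(1:ℝ)) ∩ C) ∪ sphere (0 : Euc n) (1/(1:ℝ)),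
      ∃ y ∈ (ball (0 : Euc n) (1/(1:ℝ)) ∩ D) ∪ sphere (0 : Euc n) (1/(1:ℝ)), dist x y ≤ 1 := by
    intro C D x hx
    rcases hx with hx | hx
    · have hxn : ‖x‖ ≤ 1 := by
        have := mem_ball_zero_iff.mp hx.1
        norm_num at this ⊢
        linarith
      obtain ⟨c, hc, hdc⟩ := exists_sphere_near one_pos hxn
      refine ⟨c, Or.inr (by simpa using hc), ?_⟩
      have := norm_nonneg x
      linarith
    · exact ⟨x, Or.inr hx, by simp⟩
  exact Metric.hausdorffDist_le_of_mem_dist one_pos.le (key A B) (fun y hy => by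
    obtain ⟨c, hc1, hc2⟩ := key B A y hy
    exact ⟨c, hc1, hc2⟩)

lemma patternDist_lt_of_hausdorffDist {A B : Set (Euc n)} {ε : ℝ} (hε : 0 < ε)
    (h : Metric.hausdorffDist
      ((ball (0 : Euc n) (2 / ε) ∩ A) ∪ sphere (0 : Euc n) (2 / ε))
      ((ball (0 : Euc n) (2 / ε) ∩ B) ∪ sphere (0 : Euc n) (2 / ε)) ≤ ε / 2) :
    patternDist A B < ε := by
  have hmem : ε / 2 ∈ {δ : ℝ | 0 < δ ∧ Metric.hausdorffDist
      ((ball (0 : Euc n) (1 / δ) ∩ A) ∪ sphere (0 : Euc n) (1 / δ))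
      ((ball (0 : Euc n) (1 / δ) ∩ B) ∪ sphere (0 : Euc n) (1 / δ)) ≤ δ} := by
    refine ⟨half_pos hε, ?_⟩
    rw [one_div_div]
    exact h
  calc patternDist A B ≤ ε / 2 := csInf_le (bddBelow_patternSet A B) hmem
    _ < ε := half_lt_self hε

lemma exists_of_patternDist_lt [Nontrivial (Euc n)] {A B : Set (Euc n)} {δ : ℝ}
    (h : patternDist A B < δ) :
    ∃ ε₁ : ℝ, 0 < ε₁ ∧ ε₁ < δ ∧ Metric.hausdorffDist
      ((ball (0 : Euc n) (1 / ε₁) ∩ A) ∪ sphere (0 : Euc n) (1 / ε₁))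
      ((ball (0 : Euc n) (1 / ε₁) ∩ B) ∪ sphere (0 : Euc n) (1 / ε₁)) ≤ ε₁ := by
  have := (csInf_lt_iff (bddBelow_patternSet A B) ⟨1, one_mem_patternSet A B⟩).mp h
  obtain ⟨ε₁, ⟨hpos, hd⟩, hlt⟩ := this
  exact ⟨ε₁, hpos, hlt, hd⟩

end Aux10


namespace Aux10

lemma exists_lip {n : ℕ} {P : Set (Euc n)}
    (hRD : ∃ R > 0, ∀ x : Euc n, ∃ p ∈ P, ‖p - x‖ < R)
    (hFLC : ∀ r > 0, {s : Set (Euc n) | ∃ x ∈ P, s = patch P r x}.Finite)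
    {φ : Euc n → Euc n} (hφ : ContDiff ℝ 1 φ)
    {R₀ : ℝ} (hR₀ : 0 < R₀)
    (hEq : ∀ x y : Euc n, patch P R₀ x = patch P R₀ y → fderiv ℝ φ x = fderiv ℝ φ y) :
    ∃ M : ℝ, 0 ≤ M ∧ ∀ a b : Euc n, ‖φ a - φ b‖ ≤ M * ‖a - b‖ := by
  classical
  obtain ⟨Rd, hRd, hdense⟩ := hRD
  set R₂ : ℝ := R₀ + Rd with hR₂def
  set C : Set (Set (Euc n)) := {s : Set (Euc n) | ∃ x ∈ P, s = patch P R₂ x} with hCdef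
  have hC : C.Finite := hFLC R₂ (by linarith)
  let g : Set (Euc n) → Euc n := fun s => if h : ∃ x ∈ P, s = patch P R₂ x then h.choose else 0
  have hK : IsCompact (⋃ s ∈ C, closedBall (g s) Rd) :=
    hC.isCompact_biUnion (fun s _ => isCompact_closedBall _ _)
  obtain ⟨M, hM⟩ := hK.exists_bound_of_continuousOn
    ((hφ.continuous_fderiv one_ne_zero).continuousOn)
  have hbound : ∀ u : Euc n, ‖fderiv ℝ φ u‖ ≤ max M 0 := by
    intro u
    obtain ⟨p, hp, hpu⟩ := hdense u
    set v : Euc n := u - p with hvdef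
    have hvn : ‖v‖ ≤ Rd := by
      rw [hvdef, norm_sub_rev]
      exact hpu.le
    have hmem : ∃ x ∈ P, patch P R₂ p = patch P R₂ x := ⟨p, hp, rfl⟩
    obtain ⟨hqP, hqpatch⟩ := hmem.choose_spec
    have hpatch : patch P R₀ (p + v) = patch P R₀ (hmem.choose + v) :=
      patch_translate hqpatch v (by rw [hR₂def]; linarith)
    have hfd : fderiv ℝ φ (p + v) = fderiv ℝ φ (hmem.choose + v) := hEq _ _ hpatch
    have hup : p + v = u := by rw [hvdef]; abel
    have humem : hmem.choose + v ∈ ⋃ s ∈ C, closedBall (g s) Rd := by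
      refine mem_biUnion (show patch P R₂ p ∈ C from ⟨p, hp, rfl⟩) ?_
      have hgdef : g (patch P R₂ p) = hmem.choose := dif_pos hmem
      rw [hgdef, mem_closedBall, dist_eq_norm, add_sub_cancel_left]
      exact hvn
    calc ‖fderiv ℝ φ u‖ = ‖fderiv ℝ φ (hmem.choose + v)‖ := by rw [← hup, hfd]
      _ ≤ M := hM _ humem
      _ ≤ max M 0 := le_max_left _ _
  refine ⟨max M 0, le_max_right _ _, fun a b => ?_⟩
  have := Convex.norm_image_sub_le_of_norm_hasFDerivWithin_le
    (f := φ) (f' := fun u => fderiv ℝ φ u) (s := Set.univ) (C := max M 0)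
    (fun u _ => ((hφ.differentiable one_ne_zero) u).hasFDerivAt.hasFDerivWithinAt)
    (fun u _ => hbound u) convex_univ (mem_univ b) (mem_univ a)
  exact this

end Aux10

open Aux10 in
set_option maxHeartbeats 2000000 in
theorem stmt10 {n : ℕ} (P : Set (Euc n))
    (hUD : UnifDiscrete P) (hRD : RelDense P) (hFLC : FLC P)
    (φ : Euc n → Euc n) (hφ : ContDiff ℝ 1 φ)
    (hH : HypoH P φ) (hdφ : StrongEquiv P (fderiv ℝ φ)) :
    ∀ ε > 0, ∃ δ > 0, ∀ x y : Euc n,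
      patternDist (shiftSet P x) (shiftSet P y) < δ →
      patternDist (shiftSet (φ '' P) (φ x)) (shiftSet (φ '' P) (φ y)) < ε := by
  classical
  intro ε hε
  rcases Nat.eq_zero_or_pos n with hn | hn
  · subst hn
    refine ⟨1, one_pos, fun x y _ => ?_⟩
    haveI : Subsingleton (Euc 0) := ⟨fun a b => PiLp.ext fun i => i.elim0⟩
    have hxy : x = y := Subsingleton.elim x y
    subst hxy
    exact patternDist_lt_of_hausdorffDist hε
      (by rw [Metric.hausdorffDist_self_zero]; positivity)
  · haveI : Nontrivial (Euc n) := euc_nontrivial hn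
    obtain ⟨M, hM0, hLip⟩ := exists_lip hRD hFLC hφ
      (hdφ.choose_spec.1) (hdφ.choose_spec.2)
    obtain ⟨R₀, hR₀, hEq⟩ := hdφ
    obtain ⟨δ₀, hδ₀, hsep⟩ := hUD
    obtain ⟨Rd, hRd, hdense⟩ := hRD
    set s : ℝ := 2 / ε with hsdef
    have hs : 0 < s := by positivity
    obtain ⟨r', hr', hHr⟩ := hH s hs
    set r : ℝ := r' + R₀ + Rd + 5 with hrdef
    have hr5 : 5 < r := by rw [hrdef]; linarith
    set ρ : ℝ := 2 * r + 12 with hρdef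
    obtain ⟨γ, hγ, hgap⟩ := exists_gap ⟨δ₀, hδ₀, hsep⟩ hFLC ρ
    set δ : ℝ := min (min (γ / 4) (δ₀ / 4))
      (min (ε / (8 * (M + 1))) (1 / (2 * (r + 10)))) with hδdef
    have hδpos : 0 < δ := by
      refine lt_min (lt_min (by positivity) (by positivity))
        (lt_min (by positivity) (by positivity))
    have hδγ : δ ≤ γ / 4 := (min_le_left _ _).trans (min_le_left _ _)
    have hδδ₀ : δ ≤ δ₀ / 4 := (min_le_left _ _).trans (min_le_right _ _)
    have hδε : δ ≤ ε / (8 * (M + 1)) := (min_le_right _ _).trans (min_le_left _ _)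
    have hδr : δ ≤ 1 / (2 * (r + 10)) := (min_le_right _ _).trans (min_le_right _ _)
    have hδ1 : δ ≤ 1 := by
      have h1 : 1 / (2 * (r + 10)) ≤ 1 := by
        rw [div_le_one (by linarith)]
        linarith
      linarith
    refine ⟨δ, hδpos, fun x y hxy => ?_⟩
    obtain ⟨ε₁, hε₁, hε₁δ, hd⟩ := exists_of_patternDist_lt hxy
    set L : ℝ := 1 / ε₁ with hLdef
    have hL : 2 * (r + 10) < L := by
      rw [hLdef, lt_div_iff₀ hε₁]
      have h1 : ε₁ < 1 / (2 * (r + 10)) := lt_of_lt_of_le hε₁δ hδr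
      rw [lt_div_iff₀ (by linarith)] at h1
      nlinarith
    have hLpos : 0 < L := by linarith
    have hbdd : ∀ u : Euc n,
        Bornology.IsBounded ((ball (0:Euc n) L ∩ shiftSet P u) ∪ sphere (0:Euc n) L) :=
      fun u => ((isBounded_ball).subset inter_subset_left).union isBounded_sphere
    have hnonemp : ∀ u : Euc n,
        ((ball (0:Euc n) L ∩ shiftSet P u) ∪ sphere (0:Euc n) L).Nonempty := by
      intro u
      obtain ⟨c, hc⟩ := exists_norm_eq (Euc n) hLpos.le
      exact ⟨c, Or.inr (mem_sphere_zero_iff_norm.mpr hc)⟩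
    have hnetop : EMetric.hausdorffEdist
        ((ball (0:Euc n) L ∩ shiftSet P x) ∪ sphere (0:Euc n) L)
        ((ball (0:Euc n) L ∩ shiftSet P y) ∪ sphere (0:Euc n) L) ≠ ⊤ :=
      Metric.hausdorffEdist_ne_top_of_nonempty_of_bounded (hnonemp x) (hnonemp y)
        (hbdd x) (hbdd y)
    have shadow : ∀ u v : Euc n,
        Metric.hausdorffDist ((ball (0:Euc n) L ∩ shiftSet P u) ∪ sphere (0:Euc n) L)
          ((ball (0:Euc n) L ∩ shiftSet P v) ∪ sphere (0:Euc n) L) ≤ ε₁ →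
        EMetric.hausdorffEdist ((ball (0:Euc n) L ∩ shiftSet P u) ∪ sphere (0:Euc n) L)
          ((ball (0:Euc n) L ∩ shiftSet P v) ∪ sphere (0:Euc n) L) ≠ ⊤ →
        ∀ a ∈ shiftSet P u, ‖a‖ < r + 10 → ∃ b ∈ shiftSet P v, dist a b < δ := by
      intro u v hdist hnt a ha han
      have haT : a ∈ (ball (0:Euc n) L ∩ shiftSet P u) ∪ sphere (0:Euc n) L :=
        Or.inl ⟨mem_ball_zero_iff.mpr (by linarith), ha⟩
      obtain ⟨b, hbT, hab⟩ := Metric.exists_dist_lt_of_hausdorffDist_lt haT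
        (lt_of_le_of_lt hdist hε₁δ) hnt
      rcases hbT with hb | hb
      · exact ⟨b, hb.2, hab⟩
      · exfalso
        rw [mem_sphere_zero_iff_norm] at hb
        have h1 : ‖b‖ - ‖a‖ ≤ ‖b - a‖ := norm_sub_norm_le _ _
        have h2 : ‖b - a‖ = dist a b := by rw [dist_comm, dist_eq_norm]
        rw [h2] at h1
        linarith
    have shadow_xy := shadow x y hd hnetop
    have shadow_yx : ∀ a ∈ shiftSet P y, ‖a‖ < r + 10 → ∃ b ∈ shiftSet P x, dist a b < δ := by
      refine shadow y x ?_ ?_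
      · rw [Metric.hausdorffDist_comm]; exact hd
      · convert hnetop using 1; exact EMetric.hausdorffEdist_comm
    obtain ⟨p₀, hp₀, hp₀x⟩ := hdense x
    set a₀ : Euc n := p₀ - x with ha₀def
    have ha₀ : a₀ ∈ shiftSet P x := ⟨p₀, hp₀, rfl⟩
    have ha₀n : ‖a₀‖ < Rd := hp₀x
    have hRdr : Rd < r := by rw [hrdef]; linarith
    obtain ⟨b₀, hb₀, hab₀⟩ := shadow_xy a₀ ha₀ (by linarith)
    set z : Euc n := b₀ - a₀ with hzdef
    have hzn : ‖z‖ < δ := by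
      rw [hzdef, norm_sub_rev, ← dist_eq_norm]
      exact hab₀
    have key1 : ∀ a ∈ shiftSet P x, ‖a‖ < r + 5 → a + z ∈ shiftSet P y := by
      intro a ha han
      obtain ⟨b, hb, hab⟩ := shadow_xy a ha (by linarith)
      have hu : ∃ p ∈ P, ∃ q ∈ P, b - b₀ = p - q :=
        ⟨y + b, mem_shiftSet.mp hb, y + b₀, mem_shiftSet.mp hb₀, by abel⟩
      have hv : ∃ p ∈ P, ∃ q ∈ P, a - a₀ = p - q :=
        ⟨x + a, mem_shiftSet.mp ha, x + a₀, mem_shiftSet.mp ha₀, by abel⟩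
      have habn : ‖b - a‖ < δ := by rw [← dist_eq_norm, dist_comm]; exact hab
      have hab₀n : ‖b₀ - a₀‖ < δ := by rw [← dist_eq_norm, dist_comm]; exact hab₀
      have hbn : ‖b‖ < r + 6 := by
        have h1 : ‖b‖ - ‖a‖ ≤ ‖b - a‖ := norm_sub_norm_le _ _
        linarith
      have hb₀n : ‖b₀‖ < Rd + 1 := by
        have h1 : ‖b₀‖ - ‖a₀‖ ≤ ‖b₀ - a₀‖ := norm_sub_norm_le _ _
        linarith
      have hun : ‖b - b₀‖ ≤ ρ := by
        calc ‖b - b₀‖ ≤ ‖b‖ + ‖b₀‖ := norm_sub_le _ _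
          _ ≤ ρ := by rw [hρdef]; linarith
      have hvn : ‖a - a₀‖ ≤ ρ := by
        calc ‖a - a₀‖ ≤ ‖a‖ + ‖a₀‖ := norm_sub_le _ _
          _ ≤ ρ := by rw [hρdef]; linarith
      have hdiff : ‖(b - b₀) - (a - a₀)‖ < γ := by
        have heq : (b - b₀) - (a - a₀) = (b - a) - (b₀ - a₀) := by abel
        rw [heq]
        calc ‖(b - a) - (b₀ - a₀)‖ ≤ ‖b - a‖ + ‖b₀ - a₀‖ := norm_sub_le _ _
          _ < γ := by linarith
      have hgeq := hgap _ _ hu hv hun hvn hdiff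
      have hba : b = a + z := by
        have h5 : b - (a + z) = (b - b₀) - (a - a₀) := by rw [hzdef]; abel
        have h6 : b - (a + z) = 0 := by rw [h5, hgeq, sub_self]
        exact sub_eq_zero.mp h6
      rwa [← hba]
    have key2 : ∀ c : Euc n, c + z ∈ shiftSet P y → ‖c‖ < r + 2 → c ∈ shiftSet P x := by
      intro c hc hcn
      have hczn : ‖c + z‖ < r + 3 := by
        calc ‖c + z‖ ≤ ‖c‖ + ‖z‖ := norm_add_le _ _
          _ < r + 3 := by linarith
      obtain ⟨a, ha, hca⟩ := shadow_yx (c + z) hc (by linarith)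
      have hcan : ‖a - (c + z)‖ < δ := by rw [← dist_eq_norm, dist_comm]; exact hca
      have han : ‖a‖ < r + 5 := by
        have h1 : ‖a‖ - ‖c + z‖ ≤ ‖a - (c + z)‖ := norm_sub_norm_le _ _
        linarith
      have haz := key1 a ha han
      have h1 : y + (a + z) ∈ P := mem_shiftSet.mp haz
      have h2 : y + (c + z) ∈ P := mem_shiftSet.mp hc
      have hac : ‖a - c‖ < δ₀ := by
        have heq : a - c = (a - (c + z)) + z := by abel
        rw [heq]
        calc ‖(a - (c + z)) + z‖ ≤ ‖a - (c + z)‖ + ‖z‖ := norm_add_le _ _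
          _ < δ₀ := by linarith
      by_cases hacq : y + (a + z) = y + (c + z)
      · have hace : a = c := add_right_cancel (add_left_cancel hacq)
        rw [← hace]
        exact ha
      · exfalso
        have h3 := hsep _ h1 _ h2 hacq
        have heq : (y + (a + z)) - (y + (c + z)) = a - c := by abel
        rw [heq] at h3
        linarith
    set y' : Euc n := y + z with hy'def
    have E : patch P r x = patch P r y' := by
      ext c
      rw [mem_patch, mem_patch]
      constructor
      · rintro ⟨hcn, hcx⟩
        refine ⟨hcn, ?_⟩
        have h1 := key1 c (mem_shiftSet.mpr hcx) (by linarith)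
        have h2 := mem_shiftSet.mp h1
        have heq : y' + c = y + (c + z) := by rw [hy'def]; abel
        rwa [heq]
      · rintro ⟨hcn, hcy⟩
        refine ⟨hcn, ?_⟩
        have heq : y' + c = y + (c + z) := by rw [hy'def]; abel
        rw [heq] at hcy
        have h1 := key2 c (mem_shiftSet.mpr hcy) (by linarith)
        exact mem_shiftSet.mp h1
    have Dfeq : ∀ t : Euc n, ‖t‖ ≤ r' + 1 → fderiv ℝ φ (x + t) = fderiv ℝ φ (y' + t) := by
      intro t ht
      exact hEq _ _ (patch_translate E t (by rw [hrdef]; linarith))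
    have hdiffφ := hφ.differentiable one_ne_zero
    have hfd : ∀ t ∈ closedBall (0:Euc n) r', HasFDerivWithinAt
        (fun t => φ (x + t) - φ (y' + t)) ((0 : Euc n →L[ℝ] Euc n))
        (closedBall (0:Euc n) r') t := by
      intro t ht
      rw [mem_closedBall_zero_iff] at ht
      have h1 : HasFDerivAt (fun t : Euc n => φ (x + t))
          ((fderiv ℝ φ (x + t)).comp (ContinuousLinearMap.id ℝ (Euc n))) t :=
        (hdiffφ (x + t)).hasFDerivAt.comp t ((hasFDerivAt_id t).const_add x)
      have h2 : HasFDerivAt (fun t : Euc n => φ (y' + t))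
          ((fderiv ℝ φ (y' + t)).comp (ContinuousLinearMap.id ℝ (Euc n))) t :=
        (hdiffφ (y' + t)).hasFDerivAt.comp t ((hasFDerivAt_id t).const_add y')
      have h3 := h1.sub h2
      have heq : (fderiv ℝ φ (x + t)).comp (ContinuousLinearMap.id ℝ (Euc n)) -
          (fderiv ℝ φ (y' + t)).comp (ContinuousLinearMap.id ℝ (Euc n)) = 0 := by
        rw [ContinuousLinearMap.comp_id, ContinuousLinearMap.comp_id,
          Dfeq t (by linarith), sub_self]
      rw [heq] at h3
      exact h3.hasFDerivWithinAt
    have const : ∀ t : Euc n, ‖t‖ ≤ r' → φ (x + t) - φ x = φ (y' + t) - φ y' := by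
      intro t ht
      have h0 : (0:Euc n) ∈ closedBall (0:Euc n) r' := mem_closedBall_self hr'.le
      have htm : t ∈ closedBall (0:Euc n) r' := mem_closedBall_zero_iff.mpr ht
      have hb := Convex.norm_image_sub_le_of_norm_hasFDerivWithin_le
        (C := 0) (f' := fun _ => (0 : Euc n →L[ℝ] Euc n)) hfd
        (fun u _ => by simp) (convex_closedBall _ _) h0 htm
      simp only [add_zero, zero_mul] at hb
      have heq' : φ (x + t) - φ (y' + t) = φ x - φ y' :=
        sub_eq_zero.mp (norm_le_zero_iff.mp hb)
      exact sub_eq_sub_iff_sub_eq_sub.mp heq'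
    have hr'r : r' < r := by rw [hrdef]; linarith
    have incl : ∀ u v : Euc n, patch P r u = patch P r v →
        (∀ t : Euc n, ‖t‖ ≤ r' → φ (u + t) - φ u = φ (v + t) - φ v) →
        ball (0:Euc n) s ∩ shiftSet (φ '' P) (φ u) ⊆
          ball (0:Euc n) s ∩ shiftSet (φ '' P) (φ v) := by
      rintro u v hpatch hconst a ⟨hab, haS⟩
      have haP : φ u + a ∈ φ '' P := mem_shiftSet.mp haS
      have hball : φ u + a ∈ ball (φ u) s := by
        rw [mem_ball, dist_eq_norm, add_sub_cancel_left]
        exact mem_ball_zero_iff.mp hab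
      obtain ⟨p₂, ⟨hp₂b, hp₂P⟩, hφp₂⟩ := hHr u ⟨hball, haP⟩
      set t : Euc n := p₂ - u with htdef
      have htn : ‖t‖ < r' := by
        rw [htdef, ← dist_eq_norm]
        exact mem_ball.mp hp₂b
      have hut : u + t = p₂ := by rw [htdef]; abel
      have ha : a = φ (u + t) - φ u := by
        rw [hut, hφp₂]
        abel
      have ha2 : a = φ (v + t) - φ v := by rw [ha, hconst t htn.le]
      have hvt : v + t ∈ P := by
        have h1 : t ∈ patch P r u := mem_patch.mpr ⟨htn.trans hr'r, by rwa [hut]⟩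
        rw [hpatch, mem_patch] at h1
        exact h1.2
      refine ⟨hab, mem_shiftSet.mpr ?_⟩
      rw [ha2]
      have heq : φ v + (φ (v + t) - φ v) = φ (v + t) := by abel
      rw [heq]
      exact mem_image_of_mem φ hvt
    have Simg : ball (0:Euc n) s ∩ shiftSet (φ '' P) (φ x) =
        ball (0:Euc n) s ∩ shiftSet (φ '' P) (φ y') :=
      Subset.antisymm (incl x y' E const)
        (incl y' x E.symm (fun t ht => (const t ht).symm))
    set w : Euc n := φ y' - φ y with hwdef
    have hwn : ‖w‖ ≤ ε / 8 := by
      have h1 : ‖w‖ ≤ M * ‖y' - y‖ := hLip y' y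
      have h2 : y' - y = z := by rw [hy'def]; abel
      rw [h2] at h1
      have h3 : M * ‖z‖ ≤ M * δ := mul_le_mul_of_nonneg_left hzn.le hM0
      have h4 : M * δ ≤ M * (ε / (8 * (M + 1))) := mul_le_mul_of_nonneg_left hδε hM0
      have h5 : M * (ε / (8 * (M + 1))) ≤ ε / 8 := by
        have hM1 : (0:ℝ) < M + 1 := by linarith
        have he1 : M * (ε / (8 * (M + 1))) = ε * (M / (8 * (M + 1))) := by ring
        rw [he1]
        have h6 : M / (8 * (M + 1)) ≤ 1 / 8 := by
          rw [div_le_div_iff₀ (by positivity) (by norm_num)]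
          linarith
        calc ε * (M / (8 * (M + 1))) ≤ ε * (1 / 8) :=
              mul_le_mul_of_nonneg_left h6 hε.le
          _ = ε / 8 := by ring
      linarith
    have hεw : ‖w‖ ≤ ε / 2 := by linarith
    apply patternDist_lt_of_hausdorffDist hε
    rw [← hsdef, Simg]
    apply Metric.hausdorffDist_le_of_mem_dist (by positivity)
    · intro a haT
      rcases haT with ⟨hab, haS⟩ | haSp
      · have hmem : φ y + (a + w) ∈ φ '' P := by
          have h1 := mem_shiftSet.mp haS
          have heq : φ y + (a + w) = φ y' + a := by rw [hwdef]; abel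
          rwa [heq]
        by_cases hcase : ‖a + w‖ < s
        · refine ⟨a + w, Or.inl ⟨mem_ball_zero_iff.mpr hcase, mem_shiftSet.mpr hmem⟩, ?_⟩
          rw [dist_eq_norm]
          have heq2 : a - (a + w) = -w := by abel
          rw [heq2, norm_neg]
          exact hεw
        · push_neg at hcase
          have han : ‖a‖ ≤ s := (mem_ball_zero_iff.mp hab).le
          obtain ⟨c, hc, hdc⟩ := exists_sphere_near hs han
          refine ⟨c, Or.inr hc, ?_⟩
          have h4 : ‖a + w‖ ≤ ‖a‖ + ‖w‖ := norm_add_le _ _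
          have h5 : s - ‖a‖ ≤ ‖w‖ := by linarith
          linarith
      · exact ⟨a, Or.inr haSp, by simp; positivity⟩
    · intro b hbT
      rcases hbT with ⟨hbb, hbS⟩ | hbSp
      · have hmem : φ y' + (b - w) ∈ φ '' P := by
          have h1 := mem_shiftSet.mp hbS
          have heq : φ y' + (b - w) = φ y + b := by rw [hwdef]; abel
          rwa [heq]
        by_cases hcase : ‖b - w‖ < s
        · refine ⟨b - w, Or.inl ⟨mem_ball_zero_iff.mpr hcase, mem_shiftSet.mpr hmem⟩, ?_⟩
          rw [dist_eq_norm]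
          have heq2 : b - (b - w) = w := by abel
          rw [heq2]
          exact hεw
        · push_neg at hcase
          have hbn : ‖b‖ ≤ s := (mem_ball_zero_iff.mp hbb).le
          obtain ⟨c, hc, hdc⟩ := exists_sphere_near hs hbn
          refine ⟨c, Or.inr hc, ?_⟩
          have h4 : ‖b - w‖ ≤ ‖b‖ + ‖w‖ := norm_sub_le _ _
          have h5 : s - ‖b‖ ≤ ‖w‖ := by linarith
          linarith
      · exact ⟨b, Or.inr hbSp, by simp; positivity⟩
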